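/- (Theorem 1, part 1.) Let V : ℝ → ℝ be a differentiable, convex, nonnegative potential, let k ∈ {0, −1}, and let θ, σ, φ, ψ, b be differentiable real-valued functions on [t₀, ∞) with b > 0 satisfying the Einstein–Klein–Gordon evolution system, the relation b'/b = (θ − √3σ)/3, and the constraint equation (1/3)θ² + k/b² = σ² + V(φ) + ψ²/2 at every time. If θ(t₀) ≥ 0, then θ(t) ≥ 0 and θ'(t) ≤ 0 for all t ≥ t₀. -/

import Mathlib

/-- Theorem 1, part 1. For the Bianchi I (`k = 0`) and
Bianchi III (`k = −1`) universes with a convex nonnegative potential `V`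
(units `8πG = 1`): if the Einstein–Klein–Gordon evolution system, the
scale-factor relation `b'/b = (θ − √3σ)/3` and the constraint equation hold
on `[t₀, ∞)` and the universe is initially expanding (`θ(t₀) ≥ 0`), then
`θ ≥ 0` and `θ' ≤ 0` on all of `[t₀, ∞)`. -/
theorem theorem1_part1
    (V : ℝ → ℝ) (hV : Differentiable ℝ V)
    (hVconv : ConvexOn ℝ Set.univ V) (hVnn : ∀ x, 0 ≤ V x)
    (k : ℝ) (hk : k = 0 ∨ k = -1)
    (t₀ : ℝ) (θ σ φ ψ b : ℝ → ℝ)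
    (hθ : ∀ t ∈ Set.Ici t₀, DifferentiableAt ℝ θ t)
    (hσ : ∀ t ∈ Set.Ici t₀, DifferentiableAt ℝ σ t)
    (hφ : ∀ t ∈ Set.Ici t₀, DifferentiableAt ℝ φ t)
    (hψ : ∀ t ∈ Set.Ici t₀, DifferentiableAt ℝ ψ t)
    (hbd : ∀ t ∈ Set.Ici t₀, DifferentiableAt ℝ b t)
    (hbpos : ∀ t ∈ Set.Ici t₀, 0 < b t)
    (eθ : ∀ t ∈ Set.Ici t₀,
      deriv θ t = -(1 / 3) * θ t ^ 2 - 2 * σ t ^ 2 + V (φ t) - ψ t ^ 2)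
    (eσ : ∀ t ∈ Set.Ici t₀,
      deriv σ t = -θ t ^ 2 / (3 * Real.sqrt 3) - θ t * σ t
        + σ t ^ 2 / Real.sqrt 3 + (1 / Real.sqrt 3) * (V (φ t) + ψ t ^ 2 / 2))
    (eφ : ∀ t ∈ Set.Ici t₀, deriv φ t = ψ t)
    (eψ : ∀ t ∈ Set.Ici t₀, deriv ψ t = -θ t * ψ t - deriv V (φ t))
    (eb : ∀ t ∈ Set.Ici t₀,
      deriv b t / b t = (θ t - Real.sqrt 3 * σ t) / 3)
    (hcon : ∀ t ∈ Set.Ici t₀,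
      (1 / 3) * θ t ^ 2 + k / b t ^ 2 = σ t ^ 2 + V (φ t) + ψ t ^ 2 / 2)
    (hθ₀ : 0 ≤ θ t₀) :
    ∀ t ∈ Set.Ici t₀, 0 ≤ θ t ∧ deriv θ t ≤ 0 := by
  have hk' : k ≤ 0 := by rcases hk with h | h <;> simp [h]
  have hkb : ∀ t ∈ Set.Ici t₀, k / b t ^ 2 ≤ 0 := by
    intro t ht
    have h : (0:ℝ) ≤ (-k) / b t ^ 2 :=
      div_nonneg (by linarith) (pow_pos (hbpos t ht) 2).le
    rw [neg_div] at h
    linarith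
  have hderiv_le : ∀ t ∈ Set.Ici t₀, deriv θ t ≤ 0 := by
    intro t ht
    have h1 := eθ t ht
    have h2 := hcon t ht
    have h3 := hkb t ht
    nlinarith [sq_nonneg (σ t), sq_nonneg (ψ t)]
  have hkey : ∀ t ∈ Set.Ici t₀, 0 ≤ deriv θ t + θ t ^ 2 := by
    intro t ht
    have h1 := eθ t ht
    have h2 := hcon t ht
    have h3 := hkb t ht
    have h4 := hVnn (φ t)
    nlinarith
  have hθcont : ContinuousOn θ (Set.Ici t₀) := fun t ht =>
    (hθ t ht).continuousAt.continuousWithinAt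
  set I : ℝ → ℝ := fun u => ∫ s in t₀..u, θ s with hIdef
  have hintegrable : ∀ t ∈ Set.Ici t₀, IntervalIntegrable θ MeasureTheory.volume t₀ t := by
    intro t ht
    exact (hθcont.mono (by rw [Set.uIcc_of_le ht]; exact Set.Icc_subset_Ici_self)).intervalIntegrable
  have hIat : ∀ t ∈ Set.Ioi t₀, HasDerivAt I (θ t) t := by
    intro t ht
    have hcontIoi : ContinuousOn θ (Set.Ioi t₀) := hθcont.mono Set.Ioi_subset_Ici_self
    exact intervalIntegral.integral_hasDerivAt_right (hintegrable t (Set.Ioi_subset_Ici_self ht))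
      (hcontIoi.stronglyMeasurableAtFilter isOpen_Ioi t ht)
      ((hθ t (Set.Ioi_subset_Ici_self ht)).continuousAt)
  have hIderiv : ∀ t ∈ Set.Ici t₀, HasDerivWithinAt I (θ t) (Set.Ici t₀) t := by
    intro t ht
    rcases (Set.mem_Ici.mp ht).eq_or_lt with heq | hlt
    · subst heq
      exact intervalIntegral.integral_hasDerivWithinAt_right (hintegrable t₀ ht)
        ((hθcont.mono Set.Ioi_subset_Ici_self).stronglyMeasurableAtFilter_nhdsWithin
          measurableSet_Ioi t₀)
        ((hθcont t₀ ht).mono Set.Ioi_subset_Ici_self)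
    · exact (hIat t hlt).hasDerivWithinAt
  set w : ℝ → ℝ := fun t => θ t * Real.exp (I t) with hwdef
  have hwderiv : ∀ t ∈ Set.Ioi t₀, HasDerivAt w
      ((deriv θ t + θ t ^ 2) * Real.exp (I t)) t := by
    intro t ht
    have ht' : t ∈ Set.Ici t₀ := Set.Ioi_subset_Ici_self ht
    have hexp : HasDerivAt (fun u => Real.exp (I u)) (θ t * Real.exp (I t)) t := by
      have h' := (Real.hasDerivAt_exp (I t)).comp t (hIat t ht)
      rw [mul_comm] at h'
      exact h'
    have h : HasDerivAt (fun u => θ u * Real.exp (I u)) _ t := (hθ t ht').hasDerivAt.mul hexp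
    convert h using 1
    ring
  have hwcont : ContinuousOn w (Set.Ici t₀) := by
    intro t ht
    exact ((hθ t ht).continuousAt.continuousWithinAt.mul
      (Real.continuous_exp.continuousAt.comp_continuousWithinAt (hIderiv t ht).continuousWithinAt))
  have hwmono : MonotoneOn w (Set.Ici t₀) := by
    apply monotoneOn_of_deriv_nonneg (convex_Ici t₀) hwcont
    · intro t ht
      rw [interior_Ici] at ht
      exact ((hwderiv t ht).differentiableAt).differentiableWithinAt
    · intro t ht
      rw [interior_Ici] at ht
      rw [(hwderiv t ht).deriv]
      exact mul_nonneg (hkey t (Set.Ioi_subset_Ici_self ht)) (Real.exp_pos _).le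
  intro t ht
  refine ⟨?_, hderiv_le t ht⟩
  have hI0 : I t₀ = 0 := intervalIntegral.integral_same
  have h0 : w t₀ = θ t₀ := by simp [hwdef, hI0]
  have hle : w t₀ ≤ w t := hwmono Set.self_mem_Ici ht ht
  rw [h0] at hle
  have hwt : 0 ≤ w t := le_trans hθ₀ hle
  by_contra hneg
  push_neg at hneg
  have hwt' : w t = θ t * Real.exp (I t) := rfl
  nlinarith [Real.exp_pos (I t)]
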